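/- arXiv:0706.2144 — 4 statements merged into one kernel-verified Lean document; each statement's English description precedes it below -/
import Mathlib

section
/- Let K be a field, let m ≥ r ≥ 1 be integers, let 𝔪 = (x,y) be the maximal ideal of K[x,y] at the origin, and let f ∈ K[x,y] be a polynomial with f ∈ 𝔪^r and f ∉ 𝔪^{r+1} (i.e. f has order exactly r at the origin). Then the K-vector space K[x,y]/(𝔪^m + (f)) has dimension binom(m+1,2) − binom(m−r+1,2). -/
open MvPolynomial

namespace Stmt0Aux

variable {K : Type*} [Field K]

/-- Additivity of `Finsupp.degree`. -/
lemma degree_add (a b : Fin 2 →₀ ℕ) : (a + b).degree = a.degree + b.degree := by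
  simp [Finsupp.degree_eq_weight_one, map_add]

lemma degree_fin2 (d : Fin 2 →₀ ℕ) : d.degree = d 0 + d 1 := by
  rw [Finsupp.degree_apply, Finset.sum_subset (Finset.subset_univ _)]
  · exact Fin.sum_univ_two d
  · intro i _ hi
    exact Finsupp.notMem_support_iff.mp hi

/-- The ideal of polynomials of order at least `k` at the origin. -/
def J (K : Type*) [Field K] (k : ℕ) : Ideal (MvPolynomial (Fin 2) K) where
  carrier := {p | ∀ d : Fin 2 →₀ ℕ, d.degree < k → MvPolynomial.coeff d p = 0}
  zero_mem' := by intro d _; simp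
  add_mem' := by
    intro a b ha hb d hd
    simp [MvPolynomial.coeff_add, ha d hd, hb d hd]
  smul_mem' := by
    intro c x hx d hd
    rw [smul_eq_mul, MvPolynomial.coeff_mul]
    refine Finset.sum_eq_zero fun uv huv => ?_
    rw [Finset.HasAntidiagonal.mem_antidiagonal] at huv
    have hsum : uv.1.degree + uv.2.degree = d.degree := by
      rw [← degree_add, huv]
    rw [hx uv.2 (by omega), mul_zero]

lemma mem_J {k : ℕ} {p : MvPolynomial (Fin 2) K} :
    p ∈ J K k ↔ ∀ d : Fin 2 →₀ ℕ, d.degree < k → MvPolynomial.coeff d p = 0 := Iff.rfl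

lemma J_antitone {j k : ℕ} (h : j ≤ k) : J K k ≤ J K j := by
  intro p hp d hd
  exact hp d (lt_of_lt_of_le hd h)

lemma J_mul_mem {a b : ℕ} {p q : MvPolynomial (Fin 2) K}
    (hp : p ∈ J K a) (hq : q ∈ J K b) : p * q ∈ J K (a + b) := by
  intro d hd
  rw [MvPolynomial.coeff_mul]
  refine Finset.sum_eq_zero fun uv huv => ?_
  rw [Finset.HasAntidiagonal.mem_antidiagonal] at huv
  have hsum : uv.1.degree + uv.2.degree = d.degree := by
    rw [← degree_add, huv]
  rcases lt_or_ge uv.1.degree a with h | h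
  · rw [hp uv.1 h, zero_mul]
  · rw [hq uv.2 (by omega), mul_zero]

/-- The maximal ideal at the origin. -/
noncomputable abbrev mIdeal (K : Type*) [Field K] : Ideal (MvPolynomial (Fin 2) K) :=
  Ideal.span {X 0, X 1}

lemma X_mem_J (i : Fin 2) : (X i : MvPolynomial (Fin 2) K) ∈ J K 1 := by
  intro d hd
  rw [MvPolynomial.coeff_X']
  rw [if_neg]
  intro h
  rw [← h, degree_fin2] at hd
  fin_cases i <;> simp [Finsupp.single_apply] at hd

lemma pow_le_J (k : ℕ) : (mIdeal K) ^ k ≤ J K k := by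
  induction k with
  | zero => intro p _ d hd; omega
  | succ n ih =>
    rw [pow_succ]
    rw [Ideal.mul_le]
    intro p hp q hq
    have hq1 : q ∈ J K 1 := by
      have : mIdeal K ≤ J K 1 := by
        rw [Ideal.span_le]
        rintro x (rfl | rfl)
        · exact X_mem_J 0
        · simpa using X_mem_J 1
      exact this hq
    exact J_mul_mem (ih hp) hq1

lemma monomial_mem_pow {k : ℕ} (d : Fin 2 →₀ ℕ) (c : K) (h : k ≤ d.degree) :
    MvPolynomial.monomial d c ∈ (mIdeal K) ^ k := by
  have hX0 : (X 0 : MvPolynomial (Fin 2) K) ∈ mIdeal K :=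
    Ideal.subset_span (by simp)
  have hX1 : (X 1 : MvPolynomial (Fin 2) K) ∈ mIdeal K :=
    Ideal.subset_span (by simp)
  have hmem : (X 0 : MvPolynomial (Fin 2) K) ^ (d 0) * X 1 ^ (d 1) ∈ (mIdeal K) ^ (d 0 + d 1) := by
    rw [pow_add]
    exact Ideal.mul_mem_mul (Ideal.pow_mem_pow hX0 _) (Ideal.pow_mem_pow hX1 _)
  have heq : MvPolynomial.monomial d c = C c * (X 0 ^ (d 0) * X 1 ^ (d 1)) := by
    rw [MvPolynomial.monomial_eq]
    congr 1
    rw [Finsupp.prod_fintype _ _ (fun i => pow_zero _)]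
    exact Fin.prod_univ_two _
  rw [heq]
  exact Ideal.mul_mem_left _ _ (Ideal.pow_le_pow_right (by rw [degree_fin2] at h; exact h) hmem)

lemma J_le_pow (k : ℕ) : J K k ≤ (mIdeal K) ^ k := by
  intro p hp
  rw [← MvPolynomial.support_sum_monomial_coeff p]
  refine Ideal.sum_mem _ fun d hd => ?_
  refine monomial_mem_pow d _ ?_
  by_contra h
  exact MvPolynomial.mem_support_iff.mp hd (hp d (by omega))

lemma pow_eq_J (k : ℕ) : (mIdeal K) ^ k = J K k :=
  le_antisymm (pow_le_J k) (J_le_pow k)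

/-- The key multiplicativity of the order: product of elements of exact orders `a` and `b`
is not of order `a+b+1`. -/
lemma mul_not_mem_J {a b : ℕ} {p q : MvPolynomial (Fin 2) K}
    (hpa : p ∈ J K a) (hpa' : p ∉ J K (a + 1))
    (hqb : q ∈ J K b) (hqb' : q ∉ J K (b + 1)) : p * q ∉ J K (a + b + 1) := by
  set P := homogeneousComponent a p with hPdef
  set Q := homogeneousComponent b q with hQdef
  have hcP : ∀ d : Fin 2 →₀ ℕ, MvPolynomial.coeff d P =
      if d.degree = a then MvPolynomial.coeff d p else 0 := fun d =>
    coeff_homogeneousComponent a p d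
  have hcQ : ∀ d : Fin 2 →₀ ℕ, MvPolynomial.coeff d Q =
      if d.degree = b then MvPolynomial.coeff d q else 0 := fun d =>
    coeff_homogeneousComponent b q d
  have hP : P ≠ 0 := by
    rw [mem_J] at hpa'
    push_neg at hpa'
    obtain ⟨d, hd1, hd2⟩ := hpa'
    have hda : d.degree = a := by
      rcases lt_or_ge d.degree a with h | h
      · exact absurd (hpa d h) hd2
      · omega
    intro h0
    apply hd2
    have := hcP d
    rw [h0, if_pos hda] at this
    simpa using this.symm
  have hQ : Q ≠ 0 := by
    rw [mem_J] at hqb'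
    push_neg at hqb'
    obtain ⟨d, hd1, hd2⟩ := hqb'
    have hdb : d.degree = b := by
      rcases lt_or_ge d.degree b with h | h
      · exact absurd (hqb d h) hd2
      · omega
    intro h0
    apply hd2
    have := hcQ d
    rw [h0, if_pos hdb] at this
    simpa using this.symm
  have hPQ : P * Q ≠ 0 := mul_ne_zero hP hQ
  obtain ⟨u, hu⟩ := Finset.nonempty_iff_ne_empty.mpr
    (fun h => hPQ (MvPolynomial.support_eq_empty.mp h))
  have hu' : MvPolynomial.coeff u (P * Q) ≠ 0 := MvPolynomial.mem_support_iff.mp hu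
  have hdegu : u.degree = a + b := by
    have hhom : (P * Q).IsHomogeneous (a + b) :=
      (homogeneousComponent_isHomogeneous a p).mul (homogeneousComponent_isHomogeneous b q)
    have := hhom hu'
    change (Finsupp.weight (fun _ => 1)) u = a + b at this
    rwa [← Finsupp.degree_eq_weight_one] at this
  have key : MvPolynomial.coeff u (p * q) = MvPolynomial.coeff u (P * Q) := by
    rw [MvPolynomial.coeff_mul, MvPolynomial.coeff_mul]
    refine Finset.sum_congr rfl fun uv huv => ?_
    rw [Finset.HasAntidiagonal.mem_antidiagonal] at huv
    have hsum : uv.1.degree + uv.2.degree = a + b := by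
      rw [← degree_add, huv, hdegu]
    rcases lt_trichotomy uv.1.degree a with h | h | h
    · rw [hpa uv.1 h, hcP uv.1, if_neg (by omega), zero_mul, zero_mul]
    · rw [hcP uv.1, if_pos h, hcQ uv.2, if_pos (by omega)]
    · rw [hqb uv.2 (by omega), hcQ uv.2, if_neg (by omega), mul_zero, mul_zero]
  intro hmem
  exact hu' (key ▸ hmem u (by omega))

lemma exists_order {g : MvPolynomial (Fin 2) K} {k : ℕ} (h : g ∉ J K k) :
    ∃ b, b < k ∧ g ∈ J K b ∧ g ∉ J K (b + 1) := by
  rw [mem_J] at h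
  push_neg at h
  obtain ⟨d, hd1, hd2⟩ := h
  have hdsup : d ∈ g.support := MvPolynomial.mem_support_iff.mpr hd2
  set T := g.support.image Finsupp.degree with hT
  have hTne : T.Nonempty := ⟨d.degree, Finset.mem_image_of_mem _ hdsup⟩
  refine ⟨T.min' hTne, ?_, ?_, ?_⟩
  · exact lt_of_le_of_lt (Finset.min'_le T _ (Finset.mem_image_of_mem _ hdsup)) hd1
  · intro e he
    by_contra hce
    have : e.degree ∈ T := Finset.mem_image_of_mem _ (MvPolynomial.mem_support_iff.mpr hce)
    have := Finset.min'_le T _ this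
    omega
  · intro hmem
    obtain ⟨e, hesup, hedeg⟩ := Finset.mem_image.mp (T.min'_mem hTne)
    exact MvPolynomial.mem_support_iff.mp hesup (hmem e (by omega))

lemma mul_mem_pow_iff {m r : ℕ} (hrm : r ≤ m) {f : MvPolynomial (Fin 2) K}
    (hf : f ∈ (mIdeal K) ^ r) (hf' : f ∉ (mIdeal K) ^ (r + 1)) (g : MvPolynomial (Fin 2) K) :
    f * g ∈ (mIdeal K) ^ m ↔ g ∈ (mIdeal K) ^ (m - r) := by
  rw [pow_eq_J] at hf hf' ⊢
  rw [pow_eq_J]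
  constructor
  · intro h
    by_contra hg
    obtain ⟨b, hbk, hgb, hgb'⟩ := exists_order hg
    exact mul_not_mem_J hf hf' hgb hgb' (J_antitone (by omega) h)
  · intro h
    rw [← pow_eq_J] at hf h ⊢
    have := Ideal.mul_mem_mul hf h
    rwa [← pow_add, Nat.add_sub_cancel' hrm] at this

/-! ### Dimension of `K[x,y]/𝔪^k` -/

noncomputable def eFun (p : ℕ × ℕ) : Fin 2 →₀ ℕ := Finsupp.single 0 p.1 + Finsupp.single 1 p.2

lemma eFun_apply0 (p : ℕ × ℕ) : eFun p 0 = p.1 := by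
  simp [eFun, Finsupp.single_apply]

lemma eFun_apply1 (p : ℕ × ℕ) : eFun p 1 = p.2 := by
  simp [eFun, Finsupp.single_apply]

lemma eFun_inj : Function.Injective eFun := by
  intro p q h
  have h0 := congrArg (fun d => d 0) h
  have h1 := congrArg (fun d => d 1) h
  simp only [eFun_apply0, eFun_apply1] at h0 h1
  exact Prod.ext h0 h1

lemma eFun_eval (d : Fin 2 →₀ ℕ) : eFun (d 0, d 1) = d := by
  ext i
  fin_cases i
  · simp [eFun_apply0]
  · simp [eFun_apply1]

lemma degree_eFun (p : ℕ × ℕ) : (eFun p).degree = p.1 + p.2 := by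
  rw [degree_fin2, eFun_apply0, eFun_apply1]

/-- The finset of exponents of degree `< k`. -/
noncomputable def Sk (k : ℕ) : Finset (Fin 2 →₀ ℕ) :=
  (Finset.range k).biUnion fun j => (Finset.HasAntidiagonal.antidiagonal j).image eFun

lemma mem_Sk {k : ℕ} {d : Fin 2 →₀ ℕ} : d ∈ Sk k ↔ d.degree < k := by
  simp only [Sk, Finset.mem_biUnion, Finset.mem_range, Finset.mem_image,
    Finset.HasAntidiagonal.mem_antidiagonal]
  constructor
  · rintro ⟨j, hj, p, hp, rfl⟩
    rw [degree_eFun, hp]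
    exact hj
  · intro h
    exact ⟨d.degree, h, (d 0, d 1), (degree_fin2 d).symm, eFun_eval d⟩

lemma sum_id_succ (k : ℕ) : ∑ x ∈ Finset.range k, (x + 1) = (k + 1).choose 2 := by
  induction k with
  | zero => simp
  | succ n ih =>
    have h : (n + 1 + 1).choose 2 = (n + 1).choose 1 + (n + 1).choose 2 :=
      Nat.choose_succ_succ (n + 1) 1
    rw [Nat.choose_one_right] at h
    rw [Finset.sum_range_succ, ih]
    omega

lemma card_Sk (k : ℕ) : (Sk k).card = (k + 1).choose 2 := by
  rw [Sk, Finset.card_biUnion]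
  · have : ∀ j ∈ Finset.range k, ((Finset.HasAntidiagonal.antidiagonal j).image eFun).card = j + 1 := by
      intro j _
      rw [Finset.card_image_of_injective _ eFun_inj, Finset.Nat.card_antidiagonal]
    rw [Finset.sum_congr rfl this, sum_id_succ]
  · intro i _ j _ hij
    simp only [Finset.disjoint_left, Finset.mem_image, Finset.HasAntidiagonal.mem_antidiagonal]
    rintro d ⟨p, hp, rfl⟩ ⟨q, hq, hqd⟩
    apply hij
    have h1 := degree_eFun p
    have h2 := congrArg Finsupp.degree hqd
    rw [degree_eFun, degree_eFun] at h2
    omega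

noncomputable def Φ (K : Type*) [Field K] (k : ℕ) :
    MvPolynomial (Fin 2) K →ₗ[K] ({ d // d ∈ Sk k } → K) :=
  LinearMap.pi fun d => MvPolynomial.lcoeff K d.1

lemma ker_Φ (k : ℕ) : LinearMap.ker (Φ K k) = (J K k).restrictScalars K := by
  ext p
  simp only [LinearMap.mem_ker, Submodule.restrictScalars_mem, mem_J]
  constructor
  · intro h d hd
    have := congrFun h ⟨d, mem_Sk.mpr hd⟩
    simpa [Φ, MvPolynomial.lcoeff] using this
  · intro h
    funext d
    have := h d.1 (mem_Sk.mp d.2)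
    simpa [Φ, MvPolynomial.lcoeff] using this

lemma Φ_surj (k : ℕ) : Function.Surjective (Φ K k) := by
  intro v
  refine ⟨∑ d ∈ (Sk k).attach, MvPolynomial.monomial d.1 (v d), ?_⟩
  funext d
  simp only [Φ, LinearMap.pi_apply, MvPolynomial.lcoeff, LinearMap.coe_mk, AddHom.coe_mk,
    MvPolynomial.coeff_sum]
  rw [Finset.sum_eq_single d]
  · simp [MvPolynomial.coeff_monomial]
  · intro b _ hbd
    rw [MvPolynomial.coeff_monomial, if_neg]
    intro h
    exact hbd (Subtype.ext h)
  · intro h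
    exact absurd (Finset.mem_attach _ d) h

lemma finrank_quot_J (k : ℕ) :
    Module.finrank K (MvPolynomial (Fin 2) K ⧸ (J K k).restrictScalars K) =
      (k + 1).choose 2 := by
  have e1 := Submodule.quotEquivOfEq _ _ (ker_Φ (K := K) k).symm
  have e2 := LinearMap.quotKerEquivOfSurjective (Φ K k) (Φ_surj k)
  rw [(e1.trans e2).finrank_eq, Module.finrank_fintype_fun_eq_card, Fintype.card_coe, card_Sk]

lemma fd_quot_J (k : ℕ) :
    FiniteDimensional K (MvPolynomial (Fin 2) K ⧸ (J K k).restrictScalars K) := by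
  have e1 := Submodule.quotEquivOfEq _ _ (ker_Φ (K := K) k).symm
  have e2 := LinearMap.quotKerEquivOfSurjective (Φ K k) (Φ_surj k)
  exact Module.Finite.equiv (e1.trans e2).symm

end Stmt0Aux

open Stmt0Aux in
/-- Lemma 2.5 of the paper, local-algebra form.
Let `K` be a field, `m ≥ r ≥ 1` integers, `𝔪 = (x,y)` the maximal ideal at the origin of
`K[x,y]`, and `f ∈ 𝔪^r \ 𝔪^{r+1}`.  Then
`dim_K K[x,y]/(𝔪^m + (f)) = C(m+1,2) − C(m−r+1,2)`. -/
theorem stmt_0 (K : Type*) [Field K] (m r : ℕ) (hr : 1 ≤ r) (hrm : r ≤ m)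
    (f : MvPolynomial (Fin 2) K)
    (hf : f ∈ (Ideal.span {X 0, X 1} : Ideal (MvPolynomial (Fin 2) K)) ^ r)
    (hf' : f ∉ (Ideal.span {X 0, X 1} : Ideal (MvPolynomial (Fin 2) K)) ^ (r + 1)) :
    Module.finrank K
      (MvPolynomial (Fin 2) K ⧸
        ((Ideal.span {X 0, X 1} : Ideal (MvPolynomial (Fin 2) K)) ^ m ⊔ Ideal.span {f})) =
      (m + 1).choose 2 - (m - r + 1).choose 2 := by
  classical
  let R := MvPolynomial (Fin 2) K
  set I : Ideal R := (Ideal.span {X 0, X 1} : Ideal R) ^ m ⊔ Ideal.span {f} with hI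
  set A : Submodule K R := ((Ideal.span {X 0, X 1} : Ideal R) ^ m).restrictScalars K with hA
  set B : Submodule K R := I.restrictScalars K with hB
  have hAB : A ≤ B := fun x hx => by
    simp only [hA, hB, Submodule.restrictScalars_mem] at hx ⊢
    exact Ideal.mem_sup_left hx
  -- step 0 : pass from the ideal quotient to the K-module quotient
  have e0 : (R ⧸ B) ≃ₗ[K] (R ⧸ I) := Submodule.Quotient.restrictScalarsEquiv K (I : Submodule R R)
  -- step 1 : third isomorphism theorem
  have e1 := Submodule.quotientQuotientEquivQuotient A B hAB
  -- the image W of B inside R ⧸ A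
  set W : Submodule K (R ⧸ A) := B.map A.mkQ with hW
  -- finite dimensionality of R ⧸ A
  have hAJ : A = (J K m).restrictScalars K := by
    rw [hA, pow_eq_J]
  have fdA : FiniteDimensional K (R ⧸ A) := by
    rw [hAJ]; exact fd_quot_J m
  have hrkA : Module.finrank K (R ⧸ A) = (m + 1).choose 2 := by
    rw [hAJ]; exact finrank_quot_J m
  -- W as the range of multiplication by f
  set μ : R →ₗ[K] (R ⧸ A) := A.mkQ ∘ₗ (LinearMap.mulLeft K f) with hμ
  have hWrange : W = LinearMap.range μ := by
    apply le_antisymm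
    · rintro x hx
      obtain ⟨y, hy, rfl⟩ := Submodule.mem_map.mp hx
      have hyB : y ∈ I := hy
      obtain ⟨p, hp, q, hq, rfl⟩ := Submodule.mem_sup.mp hyB
      obtain ⟨g, hg⟩ := Ideal.mem_span_singleton'.mp hq
      refine ⟨g, ?_⟩
      have hp0 : A.mkQ p = 0 := (Submodule.Quotient.mk_eq_zero A).mpr hp
      simp only [hμ, LinearMap.comp_apply, LinearMap.mulLeft_apply]
      rw [map_add, hp0, zero_add, ← hg, mul_comm]
    · rintro x ⟨g, rfl⟩
      refine Submodule.mem_map.mpr ⟨f * g, ?_, ?_⟩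
      · show f * g ∈ I
        exact Ideal.mem_sup_right (Ideal.mem_span_singleton'.mpr ⟨g, mul_comm g f⟩)
      · simp [hμ]
  have hker : LinearMap.ker μ =
      ((Ideal.span {X 0, X 1} : Ideal R) ^ (m - r)).restrictScalars K := by
    ext g
    simp only [LinearMap.mem_ker, hμ, LinearMap.comp_apply, LinearMap.mulLeft_apply,
      Submodule.restrictScalars_mem]
    rw [show A.mkQ (f * g) = 0 ↔ f * g ∈ A from Submodule.Quotient.mk_eq_zero A]
    have := mul_mem_pow_iff (K := K) hrm hf hf' g
    simpa [hA] using this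
  have hrkW : Module.finrank K W = (m - r + 1).choose 2 := by
    have e2 := LinearMap.quotKerEquivRange μ
    rw [hWrange, ← e2.finrank_eq, hker]
    have : ((Ideal.span {X 0, X 1} : Ideal R) ^ (m - r)).restrictScalars K =
        (J K (m - r)).restrictScalars K := by rw [pow_eq_J]
    rw [this]
    exact finrank_quot_J (m - r)
  -- assemble
  have hrk1 : Module.finrank K (R ⧸ I) = Module.finrank K ((R ⧸ A) ⧸ W) := by
    rw [← e0.finrank_eq, ← e1.finrank_eq]
  have hsum := Submodule.finrank_quotient_add_finrank W
  rw [hrk1]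
  omega
end

section
/- Let K be a field, let m ≥ r ≥ 1 be integers, let 𝔪 = (x,y) ⊂ K[x,y], and let f ∈ K[x,y] with f ∈ 𝔪^r and f ∉ 𝔪^{r+1}. Then the image of the principal ideal (f) in the truncated ring A_m = K[x,y]/𝔪^m is a K-vector subspace of dimension binom(m−r+1, 2). -/
open MvPolynomial

section Stmt1Aux

variable {K : Type*} [Field K]


/-- elements of 𝔪^k have all monomials of degree ≥ k -/
lemma aux_mem_pow_degree : ∀ (k : ℕ) (p : MvPolynomial (Fin 2) K),
    p ∈ (Ideal.span {X 0, X 1} : Ideal (MvPolynomial (Fin 2) K)) ^ k →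
    ∀ d ∈ p.support, k ≤ d.degree := by
  intro k
  induction k with
  | zero => intro p _ d _; exact Nat.zero_le _
  | succ k ih =>
    intro p hp
    rw [pow_succ] at hp
    refine Submodule.mul_induction_on hp ?_ ?_
    · intro a ha b hb d hd
      have hsub := MvPolynomial.support_mul a b hd
      rw [Finset.mem_add] at hsub
      obtain ⟨u, hu, v, hv, rfl⟩ := hsub
      have h1 : k ≤ u.degree := ih a ha u hu
      have h2 : 1 ≤ v.degree := by
        have : b ∈ Ideal.span (MvPolynomial.X '' (Set.univ : Set (Fin 2))) := by
          have himg : (MvPolynomial.X '' (Set.univ : Set (Fin 2)) : Set (MvPolynomial (Fin 2) K))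
              = {X 0, X 1} := by
            rw [Set.image_univ]
            ext p
            simp [Set.mem_range, Fin.exists_fin_two, eq_comm]
          rwa [himg]
        rw [mem_ideal_span_X_image] at this
        obtain ⟨i, -, hi⟩ := this v hv
        exact le_trans (Nat.one_le_iff_ne_zero.mpr hi) (Finsupp.le_degree i v)
      have : u.degree + v.degree = (u + v).degree := by
        rw [Finsupp.degree_eq_weight_one]
        exact (map_add _ u v).symm
      omega
    · intro a b ha hb d hd
      have := Finsupp.support_add hd
      rw [Finset.mem_union] at this
      rcases this with h | h
      · exact ha d h
      · exact hb d h


lemma aux_monomial_mem {k : ℕ} (d : Fin 2 →₀ ℕ) (c : K) (hd : k ≤ d.degree) :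
    monomial d c ∈ (Ideal.span {X 0, X 1} : Ideal (MvPolynomial (Fin 2) K)) ^ k := by
  have hX0 : (X 0 : MvPolynomial (Fin 2) K) ∈ Ideal.span {X 0, X 1} :=
    Ideal.subset_span (by simp)
  have hX1 : (X 1 : MvPolynomial (Fin 2) K) ∈ Ideal.span {X 0, X 1} :=
    Ideal.subset_span (by simp)
  have hmem : (X 0 : MvPolynomial (Fin 2) K) ^ (d 0) * X 1 ^ (d 1) ∈
      (Ideal.span {X 0, X 1} : Ideal (MvPolynomial (Fin 2) K)) ^ (d 0 + d 1) := by
    rw [pow_add]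
    exact Ideal.mul_mem_mul (Ideal.pow_mem_pow hX0 _) (Ideal.pow_mem_pow hX1 _)
  have hk : k ≤ d 0 + d 1 := by
    refine le_trans hd ?_
    unfold Finsupp.degree
    calc ∑ i ∈ d.support, d i ≤ ∑ i : Fin 2, d i :=
          Finset.sum_le_sum_of_subset (Finset.subset_univ _)
      _ = d 0 + d 1 := Fin.sum_univ_two _
  have : monomial d c = C c * ((X 0 : MvPolynomial (Fin 2) K) ^ (d 0) * X 1 ^ (d 1)) := by
    rw [monomial_eq]
    congr 1
    rw [Finsupp.prod_fintype _ _ (fun i => pow_zero _), Fin.prod_univ_two]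
  rw [this]
  exact Ideal.mul_mem_left _ _ (Ideal.pow_le_pow_right hk hmem)

lemma aux_degree_mem {k : ℕ} (p : MvPolynomial (Fin 2) K)
    (h : ∀ d ∈ p.support, k ≤ d.degree) :
    p ∈ (Ideal.span {X 0, X 1} : Ideal (MvPolynomial (Fin 2) K)) ^ k := by
  rw [p.as_sum]
  exact Ideal.sum_mem _ fun d hd => aux_monomial_mem d _ (h d hd)




lemma aux_inj {m r k : ℕ} (hk : k + r = m) (f g : MvPolynomial (Fin 2) K)
    (hfr : ∀ d ∈ f.support, r ≤ d.degree)
    (hf' : f ∉ (Ideal.span {X 0, X 1} : Ideal (MvPolynomial (Fin 2) K)) ^ (r + 1))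
    (hg : ∀ d ∈ g.support, d.degree < k)
    (hmul : g * f ∈ (Ideal.span {X 0, X 1} : Ideal (MvPolynomial (Fin 2) K)) ^ m) :
    g = 0 := by
  by_contra hg0
  -- minimal degree monomial of g
  have hgs : g.support.Nonempty := by
    rwa [Finset.nonempty_iff_ne_empty, ne_eq, MvPolynomial.support_eq_empty]
  obtain ⟨dg, hdg, hdgmin⟩ := Finset.exists_min_image g.support Finsupp.degree hgs
  set a := dg.degree with ha
  have hak : a < k := hg dg hdg
  -- monomial of f of degree exactly r
  have : ¬ ∀ d ∈ f.support, r + 1 ≤ d.degree := fun h => hf' (aux_degree_mem f h)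
  push_neg at this
  obtain ⟨df, hdf, hdfr⟩ := this
  have hdfr' : df.degree = r := le_antisymm (by omega) (hfr df hdf)
  -- homogeneous components
  set ga := homogeneousComponent a g with hga
  set fr := homogeneousComponent r f with hfr2
  have hga0 : ga ≠ 0 := by
    intro h
    have := coeff_homogeneousComponent (σ := Fin 2) (R := K) a g dg
    rw [← hga, h, if_pos rfl] at this
    exact (MvPolynomial.mem_support_iff.mp hdg) this.symm
  have hfr0 : fr ≠ 0 := by
    intro h
    have := coeff_homogeneousComponent (σ := Fin 2) (R := K) r f df
    rw [← hfr2, h, if_pos hdfr'] at this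
    exact (MvPolynomial.mem_support_iff.mp hdf) this.symm
  have hprod0 : ga * fr ≠ 0 := mul_ne_zero hga0 hfr0
  have hhom : (ga * fr).IsHomogeneous (a + r) :=
    (homogeneousComponent_isHomogeneous a g).mul (homogeneousComponent_isHomogeneous r f)
  -- a monomial of ga * fr
  obtain ⟨d, hd⟩ : (ga * fr).support.Nonempty := by
    rwa [Finset.nonempty_iff_ne_empty, ne_eq, MvPolynomial.support_eq_empty]
  have hdd : d.degree = a + r := by
    have := hhom (MvPolynomial.mem_support_iff.mp hd)
    rwa [Finsupp.degree_eq_weight_one]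
  have hcoeff : coeff d (g * f) = coeff d (ga * fr) := by
    classical
    rw [coeff_mul, coeff_mul]
    refine Finset.sum_congr rfl ?_
    intro x hx
    rw [Finset.HasAntidiagonal.mem_antidiagonal] at hx
    by_cases h1 : coeff x.1 g = 0
    · have : coeff x.1 ga = 0 := by
        rw [hga, coeff_homogeneousComponent, h1, ite_self]
      rw [h1, this, zero_mul, zero_mul]
    · by_cases h2 : coeff x.2 f = 0
      · have : coeff x.2 fr = 0 := by
          rw [hfr2, coeff_homogeneousComponent, h2, ite_self]
        rw [h2, this, mul_zero, mul_zero]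
      · have hx1 : a ≤ x.1.degree := hdgmin x.1 (MvPolynomial.mem_support_iff.mpr h1)
        have hx2 : r ≤ x.2.degree := hfr x.2 (MvPolynomial.mem_support_iff.mpr h2)
        have hsum : x.1.degree + x.2.degree = a + r := by
          have : (x.1 + x.2).degree = x.1.degree + x.2.degree := by
            simp only [Finsupp.degree_eq_weight_one]; exact map_add _ _ _
          rw [← this, hx, hdd]
        have e1 : x.1.degree = a := by omega
        have e2 : x.2.degree = r := by omega
        rw [hga, hfr2, coeff_homogeneousComponent, coeff_homogeneousComponent,
          if_pos e1, if_pos e2]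
  have hdsup : d ∈ (g * f).support := by
    rw [MvPolynomial.mem_support_iff, hcoeff]
    exact MvPolynomial.mem_support_iff.mp hd
  have := aux_mem_pow_degree m (g * f) hmul d hdsup
  omega


lemma deg2 (d : Fin 2 →₀ ℕ) : d.degree = d 0 + d 1 := by
  unfold Finsupp.degree
  rw [← Fin.sum_univ_two (fun i => d i)]
  exact Finset.sum_subset (Finset.subset_univ _)
    (fun x _ hx => by rwa [Finsupp.notMem_support_iff] at hx)

lemma gauss : ∀ k : ℕ, ∑ i ∈ Finset.range k, (k - i) = (k + 1).choose 2 := by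
  intro k
  induction k with
  | zero => simp
  | succ k ih =>
    rw [Finset.sum_range_succ]
    have h1 : ∑ i ∈ Finset.range k, (k + 1 - i) = (∑ i ∈ Finset.range k, (k - i)) + k := by
      have : ∀ i ∈ Finset.range k, k + 1 - i = (k - i) + 1 := by
        intro i hi; rw [Finset.mem_range] at hi; omega
      rw [Finset.sum_congr rfl this, Finset.sum_add_distrib, Finset.sum_const,
        Finset.card_range, smul_eq_mul, mul_one]
    rw [h1, ih, Nat.choose_succ_succ (k + 1) 1, Nat.choose_one_right]
    have : (k + 1).choose (Nat.succ 1) = (k + 1).choose 2 := rfl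
    omega

noncomputable def myEquiv (k : ℕ) :
    {d : Fin 2 →₀ ℕ // d.degree < k} ≃
      ((Finset.range k).sigma (fun i => Finset.range (k - i)) : Finset ((_ : ℕ) × ℕ)) where
  toFun d := ⟨⟨d.1 0, d.1 1⟩, by
    have := d.2
    rw [deg2] at this
    simp only [Finset.mem_sigma, Finset.mem_range]
    omega⟩
  invFun p := ⟨Finsupp.single 0 p.1.1 + Finsupp.single 1 p.1.2, by
    have := p.2
    simp only [Finset.mem_sigma, Finset.mem_range] at this
    rw [deg2]; simp [Finsupp.single_apply]; omega⟩
  left_inv d := by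
    ext i
    fin_cases i <;> simp [Finsupp.single_apply]
  right_inv p := by
    ext <;> simp [Finsupp.single_apply]

lemma aux_count (k : ℕ) :
    Module.finrank K (restrictSupport K {d : Fin 2 →₀ ℕ | d.degree < k}) =
      (k + 1).choose 2 := by
  have b := (basisRestrictSupport K {d : Fin 2 →₀ ℕ | d.degree < k}).reindex (myEquiv k)
  rw [Module.finrank_eq_card_basis b, Fintype.card_coe, Finset.card_sigma]
  simp only [Finset.card_range]
  exact gauss k

end Stmt1Aux



set_option synthInstance.maxHeartbeats 1000000 in
set_option maxHeartbeats 1000000 in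
/-- key step in the proof of Lemma 2.5.
Let `K` be a field, `m ≥ r ≥ 1`, `𝔪 = (x,y) ⊂ K[x,y]`, and `f ∈ 𝔪^r \ 𝔪^{r+1}`.
Then the image of the principal ideal `(f)` in `A_m = K[x,y]/𝔪^m` is a `K`-vector
subspace of dimension `C(m−r+1,2)`. -/
theorem stmt_1 (K : Type*) [Field K] (m r : ℕ) (hr : 1 ≤ r) (hrm : r ≤ m)
    (f : MvPolynomial (Fin 2) K)
    (hf : f ∈ (Ideal.span {X 0, X 1} : Ideal (MvPolynomial (Fin 2) K)) ^ r)
    (hf' : f ∉ (Ideal.span {X 0, X 1} : Ideal (MvPolynomial (Fin 2) K)) ^ (r + 1)) :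
    Module.finrank K
      ↥(Submodule.restrictScalars K
        (Ideal.map
          (Ideal.Quotient.mk ((Ideal.span {X 0, X 1} : Ideal (MvPolynomial (Fin 2) K)) ^ m))
          (Ideal.span {f}))) =
      (m - r + 1).choose 2 := by
  classical
  set I : Ideal (MvPolynomial (Fin 2) K) := Ideal.span {X 0, X 1} with hI
  set k := m - r with hkdef
  have hk : k + r = m := Nat.sub_add_cancel hrm
  set V : Submodule K (MvPolynomial (Fin 2) K) :=
    restrictSupport K {d : Fin 2 →₀ ℕ | d.degree < k} with hV
  have memV : ∀ p : MvPolynomial (Fin 2) K, p ∈ V ↔ ∀ d ∈ p.support, d.degree < k := by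
    intro p
    rw [hV, restrictSupport, AddMonoidAlgebra.mem_supported]
    constructor
    · intro h d hd; exact h hd
    · intro h d hd; exact h d hd
  -- the linear map
  set L : MvPolynomial (Fin 2) K →ₗ[K] MvPolynomial (Fin 2) K ⧸ (I ^ m) :=
    (Ideal.Quotient.mkₐ K (I ^ m)).toLinearMap ∘ₗ LinearMap.mulRight K f with hL
  have hLapp : ∀ g : MvPolynomial (Fin 2) K,
      L g = Ideal.Quotient.mk (I ^ m) (g * f) := fun g => rfl
  set L' := L ∘ₗ V.subtype with hL'
  -- range identification
  have hrange : LinearMap.range L' =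
      Submodule.restrictScalars K
        (Ideal.map (Ideal.Quotient.mk (I ^ m)) (Ideal.span {f})) := by
    apply le_antisymm
    · rintro q ⟨⟨g, hg⟩, rfl⟩
      show L g ∈ _
      rw [hLapp]
      exact Ideal.mem_map_of_mem _ (Ideal.mem_span_singleton.mpr (Dvd.intro_left g rfl))
    · intro q hq
      have : q ∈ Ideal.span ({Ideal.Quotient.mk (I ^ m) f} :
          Set (MvPolynomial (Fin 2) K ⧸ I ^ m)) := by
        have := (Submodule.restrictScalars_mem K _ q).mp hq
        rwa [Ideal.map_span, Set.image_singleton] at this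
      rw [Ideal.mem_span_singleton'] at this
      obtain ⟨a, ha⟩ := this
      obtain ⟨g, rfl⟩ := Ideal.Quotient.mk_surjective a
      set t : MvPolynomial (Fin 2) K :=
        ∑ d ∈ g.support.filter (fun d => d.degree < k), monomial d (coeff d g) with hT
      have ht : t ∈ V := by
        rw [hT]
        refine Submodule.sum_mem _ fun d hd => ?_
        rw [memV]
        intro e he
        have := MvPolynomial.support_monomial_subset he
        rw [Finset.mem_singleton] at this
        subst this
        exact (Finset.mem_filter.mp hd).2
      have hcoefft : ∀ d : Fin 2 →₀ ℕ, d.degree < k → coeff d t = coeff d g := by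
        intro d hdk
        rw [hT, MvPolynomial.coeff_sum]
        simp_rw [coeff_monomial]
        rw [Finset.sum_ite_eq' (g.support.filter (fun d => d.degree < k)) d
          (fun d => coeff d g)]
        by_cases hds : d ∈ g.support
        · rw [if_pos (Finset.mem_filter.mpr ⟨hds, hdk⟩)]
        · rw [MvPolynomial.notMem_support_iff] at hds
          rw [hds]
          split <;> rfl
      have hgt : ∀ d ∈ (g - t).support, k ≤ d.degree := by
        intro d hd
        by_contra hlt
        push_neg at hlt
        rw [MvPolynomial.mem_support_iff] at hd
        apply hd
        rw [MvPolynomial.coeff_sub, hcoefft d hlt, sub_self]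
      have hzero : Ideal.Quotient.mk (I ^ m) ((g - t) * f) = 0 := by
        rw [Ideal.Quotient.eq_zero_iff_mem, ← hk, pow_add]
        exact Ideal.mul_mem_mul (aux_degree_mem _ hgt) hf
      refine ⟨⟨t, ht⟩, ?_⟩
      show L t = q
      rw [hLapp, ← ha, ← map_mul]
      have : (g : MvPolynomial (Fin 2) K) * f = t * f + (g - t) * f := by ring
      rw [this, map_add, hzero, add_zero]
  -- injectivity
  have hinj : Function.Injective L' := by
    rw [← LinearMap.ker_eq_bot]
    rw [Submodule.eq_bot_iff]
    rintro ⟨g, hg⟩ hker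
    have h0 : Ideal.Quotient.mk (I ^ m) (g * f) = 0 := by
      have : L' ⟨g, hg⟩ = 0 := hker
      rwa [hL', LinearMap.comp_apply, Submodule.subtype_apply, hLapp] at this
    rw [Ideal.Quotient.eq_zero_iff_mem] at h0
    have hg0 : g = 0 :=
      aux_inj hk f g (aux_mem_pow_degree r f hf) hf' ((memV g).mp hg) h0
    exact Subtype.ext hg0
  rw [← hrange, LinearMap.finrank_range_of_inj hinj]
  have := aux_count (K := K) k
  rw [← hV] at this
  rw [this]
end

section
/- Let n ≥ 1, and let d, p, t, a, b, r₁,…,r_n, m₁,…,m_n be integers with d ≥ 1, p ≥ 0, 0 ≤ a ≤ b, a + b = d, r_i ≥ 0, m_i ≥ 0, and (d−1)(d−2) = Σ_i r_i(r_i − 1). For 0 ≤ h ≤ p set A_h = Σ_i r_i(m_i − h·r_i) − d(t − h·d) + a − 1 and B_h = Σ_i r_i(m_i − h·r_i) − d(t − h·d) + b − 1. Assume (p+1)·r_i ≤ m_i + 1 for all i, t + 2 ≥ d(p+1), and A_h ≥ 0 for all h = 0,…,p. Then Σ_{h=0}^{p} ( max(0, A_h) + max(0, B_h) ) = max( 0,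 2·Σ_i ( (p+1)·r_i·m_i − binom((p+1)·r_i, 2) ) − (p+1)·d·(2t + 2 − (p+1)·d) ). -/
/-- Sum of first values in range, as integers. -/
lemma sum_range_cast_two (q : ℕ) :
    (∑ h ∈ Finset.range q, (h : ℤ)) * 2 = (q : ℤ) * ((q : ℤ) - 1) := by
  induction q with
  | zero => simp
  | succ k ih =>
    rw [Finset.sum_range_succ]
    push_cast
    linear_combination ih

lemma two_dvd_mul_pred (x : ℤ) : 2 ∣ x * (x - 1) := by
  rcases Int.even_or_odd x with he | ho
  · exact Dvd.dvd.mul_right he.two_dvd _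
  · have : Even (x - 1) := by
      rcases ho with ⟨k, hk⟩; exact ⟨k, by omega⟩
    exact Dvd.dvd.mul_left this.two_dvd _

/-- arithmetic content of Proposition 6.6:
`Σ_{h=0}^{p} δ_h(C,Z,t) = γ((p+1)C, Z, t)`.

Here `A_h = Σᵢ rᵢ(mᵢ − h·rᵢ) − d(t − h·d) + a − 1` and
`B_h = Σᵢ rᵢ(mᵢ − h·rᵢ) − d(t − h·d) + b − 1`, the genus condition
`(d−1)(d−2) = Σᵢ rᵢ(rᵢ−1)` expresses that the strict transform of `C` is smooth and
rational, and `(a,b)` with `a + b = d`, `a ≤ b`, is the splitting type. -/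
theorem stmt_7 (n : ℕ) (hn : 1 ≤ n) (p : ℕ) (d t a b : ℤ) (r m : Fin n → ℤ)
    (hd : 1 ≤ d) (ha : 0 ≤ a) (hab : a ≤ b) (habd : a + b = d)
    (hr : ∀ i, 0 ≤ r i) (hm : ∀ i, 0 ≤ m i)
    (hgenus : (d - 1) * (d - 2) = ∑ i, r i * (r i - 1))
    (hmult : ∀ i, ((p : ℤ) + 1) * r i ≤ m i + 1)
    (ht : d * ((p : ℤ) + 1) ≤ t + 2)
    (hA : ∀ h : ℕ, h ≤ p →
      0 ≤ ∑ i, r i * (m i - (h : ℤ) * r i) - d * (t - (h : ℤ) * d) + a - 1) :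
    ∑ h ∈ Finset.range (p + 1),
        (max 0 (∑ i, r i * (m i - (h : ℤ) * r i) - d * (t - (h : ℤ) * d) + a - 1) +
          max 0 (∑ i, r i * (m i - (h : ℤ) * r i) - d * (t - (h : ℤ) * d) + b - 1)) =
      max 0
        (2 * ∑ i, (((p : ℤ) + 1) * r i * m i -
            (((p : ℤ) + 1) * r i) * (((p : ℤ) + 1) * r i - 1) / 2) -
          ((p : ℤ) + 1) * d * (2 * t + 2 - ((p : ℤ) + 1) * d)) := by
  set S1 : ℤ := ∑ i, r i * m i with hS1
  set S2 : ℤ := ∑ i, r i * r i with hS2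
  set S3 : ℤ := ∑ i, r i with hS3
  set P : ℤ := (p : ℤ) + 1 with hP
  -- genus in S2, S3 form
  have hgen : (d - 1) * (d - 2) = S2 - S3 := by
    rw [hgenus, hS2, hS3, ← Finset.sum_sub_distrib]
    exact Finset.sum_congr rfl fun i _ => by ring
  -- inner sum formula
  have hinner : ∀ h : ℤ, ∑ i, r i * (m i - h * r i) = S1 - h * S2 := by
    intro h
    rw [hS1, hS2, Finset.mul_sum, ← Finset.sum_sub_distrib]
    exact Finset.sum_congr rfl fun i _ => by ring
  -- B nonneg
  have hB : ∀ h : ℕ, h ≤ p →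
      0 ≤ ∑ i, r i * (m i - (h : ℤ) * r i) - d * (t - (h : ℤ) * d) + b - 1 := by
    intro h hh
    have := hA h hh
    linarith
  -- remove maxes on LHS
  have hL : ∑ h ∈ Finset.range (p + 1),
        (max 0 (∑ i, r i * (m i - (h : ℤ) * r i) - d * (t - (h : ℤ) * d) + a - 1) +
          max 0 (∑ i, r i * (m i - (h : ℤ) * r i) - d * (t - (h : ℤ) * d) + b - 1)) =
      ∑ h ∈ Finset.range (p + 1),
        ((2 * S1 - 2 * d * t + a + b - 2) + (h : ℤ) * (2 * d * d - 2 * S2)) := by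
    apply Finset.sum_congr rfl
    intro h hh
    rw [Finset.mem_range, Nat.lt_succ_iff] at hh
    rw [max_eq_right (hA h hh), max_eq_right (hB h hh), hinner]
    ring
  rw [hL]
  -- evaluate the sum over h
  have hH := sum_range_cast_two (p + 1)
  have hsum : ∑ h ∈ Finset.range (p + 1),
      ((2 * S1 - 2 * d * t + a + b - 2) + (h : ℤ) * (2 * d * d - 2 * S2)) =
      P * (2 * S1 - 2 * d * t + a + b - 2) +
        (∑ h ∈ Finset.range (p + 1), (h : ℤ)) * (2 * d * d - 2 * S2) := by
    rw [Finset.sum_add_distrib, Finset.sum_const, ← Finset.sum_mul, Finset.card_range]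
    push_cast [hP]; ring
  -- evaluate G
  have hG2 : 2 * ∑ i, (P * r i * m i - (P * r i) * (P * r i - 1) / 2) =
      2 * P * S1 - P * P * S2 + P * S3 := by
    rw [hS1, hS2, hS3, Finset.mul_sum, Finset.mul_sum, Finset.mul_sum, Finset.mul_sum,
      ← Finset.sum_sub_distrib, ← Finset.sum_add_distrib]
    apply Finset.sum_congr rfl
    intro i _
    have hdvd := two_dvd_mul_pred (P * r i)
    have h2 : 2 * ((P * r i) * (P * r i - 1) / 2) = (P * r i) * (P * r i - 1) :=
      Int.mul_ediv_cancel' hdvd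
    rw [mul_sub, h2]; ring
  -- the candidate value of the RHS max, call it G
  set G : ℤ := 2 * ∑ i, (P * r i * m i - (P * r i) * (P * r i - 1) / 2) -
      P * d * (2 * t + 2 - P * d) with hGdef
  have hGval : G = 2 * P * S1 - P * P * S2 + P * S3 - P * d * (2 * t + 2 - P * d) := by
    rw [hGdef, hG2]
  -- LHS value equals G
  have hHval : (∑ h ∈ Finset.range (p + 1), (h : ℤ)) * 2 = P * (P - 1) := by
    rw [hH]; push_cast [hP]; ring
  have heq : P * (2 * S1 - 2 * d * t + a + b - 2) +
      (∑ h ∈ Finset.range (p + 1), (h : ℤ)) * (2 * d * d - 2 * S2) = G := by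
    rw [hGval]
    linear_combination (d * d - S2) * hHval - P * hgen + P * habd
  rw [hsum, heq]
  -- now show G ≥ 0, using that the LHS terms are nonneg
  have hGnonneg : 0 ≤ G := by
    rw [← heq, ← hsum, ← hL]
    apply Finset.sum_nonneg
    intro h hh
    rw [Finset.mem_range, Nat.lt_succ_iff] at hh
    have h1 := hA h hh
    have h2 := hB h hh
    have := le_max_right (0:ℤ) (∑ i, r i * (m i - (h : ℤ) * r i) - d * (t - (h : ℤ) * d) + a - 1)
    positivity
  exact (max_eq_right hGnonneg).symm
end

section
/- Let K be a field of characteristic 0, let R = K[x,y,z], and let I = (y,z)³ ∩ (x,z)³ ∩ (x,y)³ (the ideal of the fat point scheme 3P₁ + 3P₂ + 3P₃ supported at the three coordinate points of P²). Then dim_K I₅ = 3, dim_K I₆ = 10, and the K-span of R₁·I₅ inside I₆ has dimension exactly 7. In particular the multiplication map μ₅: I₅ ⊗ R₁ → I₆ is neither injective nor surjective, and I requires exactly 3 minimal generators in degree 6. -/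
open MvPolynomial

noncomputable section

/-- The homogeneous ideal `I(P)` of all forms vanishing at the point of `ℙ²` with
homogeneous coordinate vector `p`. -/
def pointIdeal (K : Type*) [Field K] (p : Fin 3 → K) : Ideal (MvPolynomial (Fin 3) K) :=
  Ideal.span {f : MvPolynomial (Fin 3) K | (∃ d, f.IsHomogeneous d) ∧ eval p f = 0}

/-- The fat point ideal `I(Z) = I(P₁)^{m₁} ∩ ⋯ ∩ I(P_n)^{m_n}`. -/
def fatIdeal {K : Type*} [Field K] {n : ℕ} (P : Fin n → Fin 3 → K) (m : Fin n → ℕ) :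
    Ideal (MvPolynomial (Fin 3) K) :=
  ⨅ i, pointIdeal K (P i) ^ m i

/-- The degree-`k` graded piece `I_k` of a (homogeneous) ideal `I ⊆ K[x₀,x₁,x₂]`,
as a `K`-subspace of the polynomial ring. -/
def idealPiece {K : Type*} [Field K] (I : Ideal (MvPolynomial (Fin 3) K)) (k : ℕ) :
    Submodule K (MvPolynomial (Fin 3) K) :=
  Submodule.restrictScalars K I ⊓ homogeneousSubmodule (Fin 3) K k

/-- `dim_K (R/I)_k`, computed as the dimension of `R_k/(I ∩ R_k)`. -/
def quotPieceDim {K : Type*} [Field K] (I : Ideal (MvPolynomial (Fin 3) K)) (k : ℕ) : ℕ :=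
  Module.finrank K
    (↥(homogeneousSubmodule (Fin 3) K k) ⧸
      Submodule.comap (homogeneousSubmodule (Fin 3) K k).subtype (idealPiece I k))

/-- The `K`-span of `R₁ · I_t`, i.e. the image of the multiplication map
`μ_t : I_t ⊗ R₁ → I_{t+1}`. -/
def mulSpan {K : Type*} [Field K] (I : Ideal (MvPolynomial (Fin 3) K)) (t : ℕ) :
    Submodule K (MvPolynomial (Fin 3) K) :=
  Submodule.span K
    {h : MvPolynomial (Fin 3) K |
      ∃ f ∈ homogeneousSubmodule (Fin 3) K 1, ∃ g ∈ idealPiece I t, h = f * g}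

end

noncomputable section AuxStmt9
variable {K : Type*} [Field K]

def ex (a b c : ℕ) : Fin 3 →₀ ℕ :=
  Finsupp.single 0 a + Finsupp.single 1 b + Finsupp.single 2 c

@[simp] lemma ex_apply0 (a b c : ℕ) : ex a b c 0 = a := by
  simp [ex, Finsupp.single_apply]
@[simp] lemma ex_apply1 (a b c : ℕ) : ex a b c 1 = b := by
  simp [ex, Finsupp.single_apply]
@[simp] lemma ex_apply2 (a b c : ℕ) : ex a b c 2 = c := by
  simp [ex, Finsupp.single_apply]

lemma finsupp_eq_ex (m : Fin 3 →₀ ℕ) : m = ex (m 0) (m 1) (m 2) := by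
  ext t
  fin_cases t <;> simp [ex, Finsupp.single_apply]

lemma deg3 (d : Fin 3 →₀ ℕ) : d.degree = d 0 + d 1 + d 2 := by
  rw [Finsupp.degree_apply,
    Finset.sum_subset (Finset.subset_univ _)
      (fun x _ hx => Finsupp.notMem_support_iff.mp hx)]
  simp [Fin.sum_univ_three]

lemma isHomog_deg {f : MvPolynomial (Fin 3) K} {n : ℕ} (hf : f.IsHomogeneous n)
    {m : Fin 3 →₀ ℕ} (hm : m ∈ f.support) : m 0 + m 1 + m 2 = n := by
  have h := hf (mem_support_iff.mp hm)
  rw [← deg3, Finsupp.degree_eq_weight_one]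
  exact h

lemma isHomog_ex (a b c n : ℕ) (h : a + b + c = n) (r : K) :
    (monomial (ex a b c) r).IsHomogeneous n :=
  isHomogeneous_monomial r (by rw [deg3]; simp [h])

lemma support_mono_ex (a b c : ℕ) :
    (monomial (ex a b c) (1 : K)).support = {ex a b c} := by
  classical
  rw [support_monomial, if_neg one_ne_zero]

lemma mono_smul (m : Fin 3 →₀ ℕ) (r : K) : monomial m r = r • monomial m 1 := by
  rw [smul_monomial, smul_eq_mul, mul_one]

lemma X_mul_mono (k : Fin 3) (s : Fin 3 →₀ ℕ) :
    X k * monomial s (1:K) = monomial (Finsupp.single k 1 + s) 1 := by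
  rw [X, monomial_mul, one_mul]

def NId (K : Type*) [Field K] (i j : Fin 3) (k : ℕ) : Ideal (MvPolynomial (Fin 3) K) :=
  Ideal.span ((fun s => monomial s (1 : K)) '' {s | k ≤ s i + s j})

lemma mem_NId {i j : Fin 3} {k : ℕ} {f : MvPolynomial (Fin 3) K} :
    f ∈ NId K i j k ↔ ∀ m ∈ f.support, k ≤ m i + m j := by
  rw [NId, mem_ideal_span_monomial_image]
  constructor
  · intro h m hm
    obtain ⟨s, hs, hsm⟩ := h m hm
    simp only [Set.mem_setOf_eq] at hs
    have hi := hsm i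
    have hj := hsm j
    omega
  · intro h m hm
    exact ⟨m, h m hm, le_rfl⟩

lemma NId_mul_le (i j : Fin 3) (a b : ℕ) :
    NId K i j a * NId K i j b ≤ NId K i j (a + b) := by
  refine Ideal.mul_le.2 fun f hf g hg => ?_
  rw [mem_NId] at *
  intro m hm
  have hmm := MvPolynomial.support_mul f g hm
  rw [Finset.mem_add] at hmm
  obtain ⟨m1, hm1, m2, hm2, rfl⟩ := hmm
  have := hf m1 hm1
  have := hg m2 hm2
  simp only [Finsupp.add_apply]
  omega

lemma span_le_NId (i j : Fin 3) (hij : i ≠ j) :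
    Ideal.span {X i, X j} ≤ NId K i j 1 := by
  rw [Ideal.span_le]
  rintro f (rfl | rfl) <;>
  · rw [SetLike.mem_coe, mem_NId]
    intro m hm
    rw [MvPolynomial.support_X, Finset.mem_singleton] at hm
    subst hm
    simp [Finsupp.single_apply, hij, hij.symm]

lemma pow3_eq (i j : Fin 3) (hij : i ≠ j) :
    (Ideal.span {X i, X j} : Ideal (MvPolynomial (Fin 3) K)) ^ 3 = NId K i j 3 := by
  apply le_antisymm
  · have h1 : Ideal.span {X i, X j} ≤ NId K i j 1 := span_le_NId i j hij
    have h2 : (Ideal.span {X i, X j} : Ideal (MvPolynomial (Fin 3) K)) ^ 3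
        = Ideal.span {X i, X j} * Ideal.span {X i, X j} * Ideal.span {X i, X j} := by
      ring
    rw [h2]
    calc Ideal.span {X i, X j} * Ideal.span {X i, X j} * Ideal.span {X i, X j}
        ≤ NId K i j 1 * NId K i j 1 * NId K i j 1 :=
          Ideal.mul_mono (Ideal.mul_mono h1 h1) h1
      _ ≤ NId K i j (1 + 1) * NId K i j 1 := Ideal.mul_mono_left (NId_mul_le i j 1 1)
      _ ≤ NId K i j (1 + 1 + 1) := NId_mul_le i j (1+1) 1
      _ = NId K i j 3 := by norm_num
  · rw [NId, Ideal.span_le]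
    rintro _ ⟨s, hs, rfl⟩
    simp only [Set.mem_setOf_eq] at hs
    obtain ⟨a, b, hai, hbj, hab⟩ : ∃ a b, a ≤ s i ∧ b ≤ s j ∧ a + b = 3 :=
      ⟨min (s i) 3, 3 - min (s i) 3, min_le_left _ _, by omega, by omega⟩
    have hXi : X i ∈ (Ideal.span {X i, X j} : Ideal (MvPolynomial (Fin 3) K)) := Ideal.subset_span (by left; rfl)
    have hXj : X j ∈ (Ideal.span {X i, X j} : Ideal (MvPolynomial (Fin 3) K)) := Ideal.subset_span (by right; rfl)
    have hle : (Finsupp.single i a + Finsupp.single j b) ≤ s := by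
      rw [Finsupp.le_def]
      intro t
      rcases eq_or_ne t i with rfl | hti
      · simp [Finsupp.single_apply, hij.symm, hai]
      · rcases eq_or_ne t j with rfl | htj
        · simp [Finsupp.single_apply, hij, hbj]
        · simp [Finsupp.single_apply, Ne.symm hti, Ne.symm htj]
    have hsum : s - (Finsupp.single i a + Finsupp.single j b)
        + (Finsupp.single i a + Finsupp.single j b) = s := tsub_add_cancel_of_le hle
    have key : (monomial s (1:K)) =
        (monomial (s - (Finsupp.single i a + Finsupp.single j b)) 1) * (X i ^ a * X j ^ b) := by
      rw [X_pow_eq_monomial, X_pow_eq_monomial, monomial_mul, monomial_mul, one_mul, one_mul,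
        ← add_assoc]
      rw [add_assoc, hsum]
    show (monomial s (1:K)) ∈ _
    rw [key]
    have h1 : X i ^ a * X j ^ b ∈ (Ideal.span {X i, X j} : Ideal (MvPolynomial (Fin 3) K)) ^ (a + b) := by
      rw [pow_add]
      exact Ideal.mul_mem_mul (Ideal.pow_mem_pow hXi a) (Ideal.pow_mem_pow hXj b)
    rw [hab] at h1
    exact Ideal.mul_mem_left _ _ h1

lemma finrank_mono_span {n : ℕ} (d : Fin n → (Fin 3 →₀ ℕ)) (hd : Function.Injective d) :
    Module.finrank K (Submodule.span K (Set.range fun k => monomial (d k) (1:K))) = n := by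
  have h : (fun k => monomial (d k) (1:K)) = (basisMonomials (Fin 3) K) ∘ d := by
    funext k
    simp [coe_basisMonomials]
  rw [h, finrank_span_eq_card ((basisMonomials (Fin 3) K).linearIndependent.comp d hd),
    Fintype.card_fin]

lemma mem_I_iff {f : MvPolynomial (Fin 3) K} :
    f ∈ ((Ideal.span {X 1, X 2} : Ideal (MvPolynomial (Fin 3) K)) ^ 3 ⊓
        (Ideal.span {X 0, X 2} : Ideal (MvPolynomial (Fin 3) K)) ^ 3 ⊓
        (Ideal.span {X 0, X 1} : Ideal (MvPolynomial (Fin 3) K)) ^ 3) ↔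
    ∀ m ∈ f.support, 3 ≤ m 1 + m 2 ∧ 3 ≤ m 0 + m 2 ∧ 3 ≤ m 0 + m 1 := by
  rw [pow3_eq 1 2 (by decide), pow3_eq 0 2 (by decide), pow3_eq 0 1 (by decide)]
  simp only [Submodule.mem_inf, mem_NId]
  constructor
  · intro h m hm
    exact ⟨h.1.1 m hm, h.1.2 m hm, h.2 m hm⟩
  · intro h
    exact ⟨⟨fun m hm => (h m hm).1, fun m hm => (h m hm).2.1⟩, fun m hm => (h m hm).2.2⟩

lemma mono_mem_piece {I : Ideal (MvPolynomial (Fin 3) K)}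
    (hI : I = (Ideal.span {X 1, X 2} : Ideal (MvPolynomial (Fin 3) K)) ^ 3 ⊓
        (Ideal.span {X 0, X 2} : Ideal (MvPolynomial (Fin 3) K)) ^ 3 ⊓
        (Ideal.span {X 0, X 1} : Ideal (MvPolynomial (Fin 3) K)) ^ 3)
    (a b c k : ℕ) (h : a + b + c = k)
    (h12 : 3 ≤ b + c) (h02 : 3 ≤ a + c) (h01 : 3 ≤ a + b) :
    monomial (ex a b c) (1:K) ∈ idealPiece I k := by
  refine Submodule.mem_inf.mpr ⟨?_, isHomog_ex a b c k h 1⟩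
  show monomial (ex a b c) (1:K) ∈ I
  rw [hI, mem_I_iff]
  intro m hm
  rw [support_mono_ex, Finset.mem_singleton] at hm
  subst hm
  simp [h12, h02, h01]

lemma piece_le {I : Ideal (MvPolynomial (Fin 3) K)}
    (hI : I = (Ideal.span {X 1, X 2} : Ideal (MvPolynomial (Fin 3) K)) ^ 3 ⊓
        (Ideal.span {X 0, X 2} : Ideal (MvPolynomial (Fin 3) K)) ^ 3 ⊓
        (Ideal.span {X 0, X 1} : Ideal (MvPolynomial (Fin 3) K)) ^ 3)
    (k : ℕ) (W : Submodule K (MvPolynomial (Fin 3) K))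
    (hW : ∀ m : Fin 3 →₀ ℕ, m 0 + m 1 + m 2 = k → 3 ≤ m 1 + m 2 → 3 ≤ m 0 + m 2 →
      3 ≤ m 0 + m 1 → monomial m (1:K) ∈ W) :
    idealPiece I k ≤ W := by
  intro f hf
  obtain ⟨hfI, hfH⟩ := Submodule.mem_inf.mp hf
  have hfI' : f ∈ ((Ideal.span {X 1, X 2} : Ideal (MvPolynomial (Fin 3) K)) ^ 3 ⊓
      (Ideal.span {X 0, X 2} : Ideal (MvPolynomial (Fin 3) K)) ^ 3 ⊓
      (Ideal.span {X 0, X 1} : Ideal (MvPolynomial (Fin 3) K)) ^ 3) := by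
    rw [← hI]; exact hfI
  rw [← support_sum_monomial_coeff f]
  apply Submodule.sum_mem
  intro m hm
  have hc := mem_I_iff.mp hfI' m hm
  have hd := isHomog_deg hfH hm
  rw [mono_smul]
  exact Submodule.smul_mem _ _ (hW m hd hc.1 hc.2.1 hc.2.2)

def d5 : Fin 3 → (Fin 3 →₀ ℕ)
  | ⟨0,_⟩ => ex 2 2 1
  | ⟨1,_⟩ => ex 2 1 2
  | ⟨2,_⟩ => ex 1 2 2

lemma piece5 {I : Ideal (MvPolynomial (Fin 3) K)}
    (hI : I = (Ideal.span {X 1, X 2} : Ideal (MvPolynomial (Fin 3) K)) ^ 3 ⊓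
        (Ideal.span {X 0, X 2} : Ideal (MvPolynomial (Fin 3) K)) ^ 3 ⊓
        (Ideal.span {X 0, X 1} : Ideal (MvPolynomial (Fin 3) K)) ^ 3) :
    idealPiece I 5 = Submodule.span K (Set.range fun k => monomial (d5 k) (1:K)) := by
  apply le_antisymm
  · apply piece_le hI
    intro m h0 h1 h2 h3
    apply Submodule.subset_span
    have hcase : (m 0 = 2 ∧ m 1 = 2 ∧ m 2 = 1) ∨ (m 0 = 2 ∧ m 1 = 1 ∧ m 2 = 2) ∨
        (m 0 = 1 ∧ m 1 = 2 ∧ m 2 = 2) := by omega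
    have hm := finsupp_eq_ex m
    rcases hcase with ⟨ha,hb,hc⟩|⟨ha,hb,hc⟩|⟨ha,hb,hc⟩ <;> rw [ha, hb, hc] at hm
    · exact ⟨⟨0, by norm_num⟩, by rw [hm]; rfl⟩
    · exact ⟨⟨1, by norm_num⟩, by rw [hm]; rfl⟩
    · exact ⟨⟨2, by norm_num⟩, by rw [hm]; rfl⟩
  · rw [Submodule.span_le]
    rintro _ ⟨⟨k, hk⟩, rfl⟩
    interval_cases k <;> apply SetLike.mem_coe.mpr
    · exact mono_mem_piece hI 2 2 1 5 (by norm_num) (by norm_num) (by norm_num) (by norm_num)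
    · exact mono_mem_piece hI 2 1 2 5 (by norm_num) (by norm_num) (by norm_num) (by norm_num)
    · exact mono_mem_piece hI 1 2 2 5 (by norm_num) (by norm_num) (by norm_num) (by norm_num)

def d6 : Fin 10 → (Fin 3 →₀ ℕ)
  | ⟨0,_⟩ => ex 3 3 0
  | ⟨1,_⟩ => ex 3 0 3
  | ⟨2,_⟩ => ex 0 3 3
  | ⟨3,_⟩ => ex 3 2 1
  | ⟨4,_⟩ => ex 3 1 2
  | ⟨5,_⟩ => ex 2 3 1
  | ⟨6,_⟩ => ex 1 3 2
  | ⟨7,_⟩ => ex 2 1 3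
  | ⟨8,_⟩ => ex 1 2 3
  | ⟨9,_⟩ => ex 2 2 2

set_option maxHeartbeats 1000000 in
lemma piece6 {I : Ideal (MvPolynomial (Fin 3) K)}
    (hI : I = (Ideal.span {X 1, X 2} : Ideal (MvPolynomial (Fin 3) K)) ^ 3 ⊓
        (Ideal.span {X 0, X 2} : Ideal (MvPolynomial (Fin 3) K)) ^ 3 ⊓
        (Ideal.span {X 0, X 1} : Ideal (MvPolynomial (Fin 3) K)) ^ 3) :
    idealPiece I 6 = Submodule.span K (Set.range fun k => monomial (d6 k) (1:K)) := by
  apply le_antisymm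
  · apply piece_le hI
    intro m h0 h1 h2 h3
    apply Submodule.subset_span
    have hcase : (m 0 = 3 ∧ m 1 = 3 ∧ m 2 = 0) ∨ (m 0 = 3 ∧ m 1 = 0 ∧ m 2 = 3) ∨
        (m 0 = 0 ∧ m 1 = 3 ∧ m 2 = 3) ∨ (m 0 = 3 ∧ m 1 = 2 ∧ m 2 = 1) ∨
        (m 0 = 3 ∧ m 1 = 1 ∧ m 2 = 2) ∨ (m 0 = 2 ∧ m 1 = 3 ∧ m 2 = 1) ∨
        (m 0 = 1 ∧ m 1 = 3 ∧ m 2 = 2) ∨ (m 0 = 2 ∧ m 1 = 1 ∧ m 2 = 3) ∨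
        (m 0 = 1 ∧ m 1 = 2 ∧ m 2 = 3) ∨ (m 0 = 2 ∧ m 1 = 2 ∧ m 2 = 2) := by
      have key : ∀ a b c : ℕ, a + b + c = 6 → 3 ≤ b + c → 3 ≤ a + c → 3 ≤ a + b →
          (a = 3 ∧ b = 3 ∧ c = 0) ∨ (a = 3 ∧ b = 0 ∧ c = 3) ∨
          (a = 0 ∧ b = 3 ∧ c = 3) ∨ (a = 3 ∧ b = 2 ∧ c = 1) ∨
          (a = 3 ∧ b = 1 ∧ c = 2) ∨ (a = 2 ∧ b = 3 ∧ c = 1) ∨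
          (a = 1 ∧ b = 3 ∧ c = 2) ∨ (a = 2 ∧ b = 1 ∧ c = 3) ∨
          (a = 1 ∧ b = 2 ∧ c = 3) ∨ (a = 2 ∧ b = 2 ∧ c = 2) := by
        intro a b c h0' h1' h2' h3'
        have hba : a ≤ 3 := by omega
        have hbb : b ≤ 3 := by omega
        have hbc : c ≤ 3 := by omega
        interval_cases a <;> interval_cases b <;> interval_cases c <;>
          first | (exfalso; omega) | decide
      exact key (m 0) (m 1) (m 2) h0 h1 h2 h3
    have hm := finsupp_eq_ex m
    rcases hcase with ⟨ha,hb,hc⟩|⟨ha,hb,hc⟩|⟨ha,hb,hc⟩|⟨ha,hb,hc⟩|⟨ha,hb,hc⟩|⟨ha,hb,hc⟩|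
      ⟨ha,hb,hc⟩|⟨ha,hb,hc⟩|⟨ha,hb,hc⟩|⟨ha,hb,hc⟩ <;> rw [ha, hb, hc] at hm
    · exact ⟨⟨0, by norm_num⟩, by rw [hm]; rfl⟩
    · exact ⟨⟨1, by norm_num⟩, by rw [hm]; rfl⟩
    · exact ⟨⟨2, by norm_num⟩, by rw [hm]; rfl⟩
    · exact ⟨⟨3, by norm_num⟩, by rw [hm]; rfl⟩
    · exact ⟨⟨4, by norm_num⟩, by rw [hm]; rfl⟩
    · exact ⟨⟨5, by norm_num⟩, by rw [hm]; rfl⟩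
    · exact ⟨⟨6, by norm_num⟩, by rw [hm]; rfl⟩
    · exact ⟨⟨7, by norm_num⟩, by rw [hm]; rfl⟩
    · exact ⟨⟨8, by norm_num⟩, by rw [hm]; rfl⟩
    · exact ⟨⟨9, by norm_num⟩, by rw [hm]; rfl⟩
  · rw [Submodule.span_le]
    rintro _ ⟨⟨k, hk⟩, rfl⟩
    interval_cases k <;> apply SetLike.mem_coe.mpr
    · exact mono_mem_piece hI 3 3 0 6 (by norm_num) (by norm_num) (by norm_num) (by norm_num)
    · exact mono_mem_piece hI 3 0 3 6 (by norm_num) (by norm_num) (by norm_num) (by norm_num)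
    · exact mono_mem_piece hI 0 3 3 6 (by norm_num) (by norm_num) (by norm_num) (by norm_num)
    · exact mono_mem_piece hI 3 2 1 6 (by norm_num) (by norm_num) (by norm_num) (by norm_num)
    · exact mono_mem_piece hI 3 1 2 6 (by norm_num) (by norm_num) (by norm_num) (by norm_num)
    · exact mono_mem_piece hI 2 3 1 6 (by norm_num) (by norm_num) (by norm_num) (by norm_num)
    · exact mono_mem_piece hI 1 3 2 6 (by norm_num) (by norm_num) (by norm_num) (by norm_num)
    · exact mono_mem_piece hI 2 1 3 6 (by norm_num) (by norm_num) (by norm_num) (by norm_num)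
    · exact mono_mem_piece hI 1 2 3 6 (by norm_num) (by norm_num) (by norm_num) (by norm_num)
    · exact mono_mem_piece hI 2 2 2 6 (by norm_num) (by norm_num) (by norm_num) (by norm_num)

def d7 : Fin 7 → (Fin 3 →₀ ℕ)
  | ⟨0,_⟩ => ex 3 2 1
  | ⟨1,_⟩ => ex 2 3 1
  | ⟨2,_⟩ => ex 2 2 2
  | ⟨3,_⟩ => ex 3 1 2
  | ⟨4,_⟩ => ex 2 1 3
  | ⟨5,_⟩ => ex 1 3 2
  | ⟨6,_⟩ => ex 1 2 3

lemma s0 (a b c : ℕ) : Finsupp.single 0 1 + ex a b c = ex (a+1) b c := by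
  ext t; fin_cases t <;> simp [ex, Finsupp.single_apply] <;> omega
lemma s1 (a b c : ℕ) : Finsupp.single 1 1 + ex a b c = ex a (b+1) c := by
  ext t; fin_cases t <;> simp [ex, Finsupp.single_apply] <;> omega
lemma s2 (a b c : ℕ) : Finsupp.single 2 1 + ex a b c = ex a b (c+1) := by
  ext t; fin_cases t <;> simp [ex, Finsupp.single_apply] <;> omega

lemma ex100 : ex 1 0 0 = Finsupp.single 0 1 := by
  ext t; fin_cases t <;> simp [ex, Finsupp.single_apply]
lemma ex010 : ex 0 1 0 = Finsupp.single 1 1 := by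
  ext t; fin_cases t <;> simp [ex, Finsupp.single_apply]
lemma ex001 : ex 0 0 1 = Finsupp.single 2 1 := by
  ext t; fin_cases t <;> simp [ex, Finsupp.single_apply]

lemma X0_eq : (X 0 : MvPolynomial (Fin 3) K) = monomial (ex 1 0 0) 1 := by rw [ex100]; rfl
lemma X1_eq : (X 1 : MvPolynomial (Fin 3) K) = monomial (ex 0 1 0) 1 := by rw [ex010]; rfl
lemma X2_eq : (X 2 : MvPolynomial (Fin 3) K) = monomial (ex 0 0 1) 1 := by rw [ex001]; rfl

lemma homog1_le :
    (homogeneousSubmodule (Fin 3) K 1 : Submodule K (MvPolynomial (Fin 3) K)) ≤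
      Submodule.span K (Set.range X) := by
  intro f hf
  rw [← support_sum_monomial_coeff f]
  apply Submodule.sum_mem
  intro m hm
  have hd := isHomog_deg hf hm
  have hme := finsupp_eq_ex m
  rw [mono_smul]
  apply Submodule.smul_mem
  apply Submodule.subset_span
  have hcase : (m 0 = 1 ∧ m 1 = 0 ∧ m 2 = 0) ∨ (m 0 = 0 ∧ m 1 = 1 ∧ m 2 = 0) ∨
      (m 0 = 0 ∧ m 1 = 0 ∧ m 2 = 1) := by omega
  rcases hcase with ⟨ha,hb,hc⟩|⟨ha,hb,hc⟩|⟨ha,hb,hc⟩ <;> rw [ha,hb,hc] at hme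
  · exact ⟨0, by rw [X0_eq, hme]⟩
  · exact ⟨1, by rw [X1_eq, hme]⟩
  · exact ⟨2, by rw [X2_eq, hme]⟩

lemma mono_congr {s t : Fin 3 →₀ ℕ} (h : ∀ u : Fin 3, s u = t u) :
    monomial s (1:K) = monomial t 1 := by
  rw [monomial_eq_monomial_iff]
  exact Or.inl ⟨Finsupp.ext h, rfl⟩

set_option maxHeartbeats 1000000 in
lemma mulSpan5 {I : Ideal (MvPolynomial (Fin 3) K)}
    (hI : I = (Ideal.span {X 1, X 2} : Ideal (MvPolynomial (Fin 3) K)) ^ 3 ⊓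
        (Ideal.span {X 0, X 2} : Ideal (MvPolynomial (Fin 3) K)) ^ 3 ⊓
        (Ideal.span {X 0, X 1} : Ideal (MvPolynomial (Fin 3) K)) ^ 3) :
    mulSpan I 5 = Submodule.span K (Set.range fun k => monomial (d7 k) (1:K)) := by
  apply le_antisymm
  · rw [mulSpan, Submodule.span_le]
    rintro h ⟨f, hf, g, hg, rfl⟩
    have hf' : f ∈ Submodule.span K (Set.range X) := homog1_le hf
    have hg' : g ∈ Submodule.span K (Set.range fun k => monomial (d5 k) (1:K)) := by
      rw [← piece5 hI]; exact hg
    have hmul := Submodule.mul_mem_mul hf' hg'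
    rw [Submodule.span_mul_span] at hmul
    refine SetLike.mem_coe.mpr (Submodule.span_le.mpr ?_ hmul)
    rintro x ⟨p, ⟨k, rfl⟩, q, ⟨l, rfl⟩, rfl⟩
    apply Submodule.subset_span
    fin_cases k <;> fin_cases l
    · refine ⟨⟨0, by norm_num⟩, ?_⟩
      beta_reduce
      rw [X_mul_mono]
      exact mono_congr (by intro u; fin_cases u <;> simp [d7, d5, ex, Finsupp.single_apply])
    · refine ⟨⟨3, by norm_num⟩, ?_⟩
      beta_reduce
      rw [X_mul_mono]
      exact mono_congr (by intro u; fin_cases u <;> simp [d7, d5, ex, Finsupp.single_apply])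
    · refine ⟨⟨2, by norm_num⟩, ?_⟩
      beta_reduce
      rw [X_mul_mono]
      exact mono_congr (by intro u; fin_cases u <;> simp [d7, d5, ex, Finsupp.single_apply])
    · refine ⟨⟨1, by norm_num⟩, ?_⟩
      beta_reduce
      rw [X_mul_mono]
      exact mono_congr (by intro u; fin_cases u <;> simp [d7, d5, ex, Finsupp.single_apply])
    · refine ⟨⟨2, by norm_num⟩, ?_⟩
      beta_reduce
      rw [X_mul_mono]
      exact mono_congr (by intro u; fin_cases u <;> simp [d7, d5, ex, Finsupp.single_apply])
    · refine ⟨⟨5, by norm_num⟩, ?_⟩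
      beta_reduce
      rw [X_mul_mono]
      exact mono_congr (by intro u; fin_cases u <;> simp [d7, d5, ex, Finsupp.single_apply])
    · refine ⟨⟨2, by norm_num⟩, ?_⟩
      beta_reduce
      rw [X_mul_mono]
      exact mono_congr (by intro u; fin_cases u <;> simp [d7, d5, ex, Finsupp.single_apply])
    · refine ⟨⟨4, by norm_num⟩, ?_⟩
      beta_reduce
      rw [X_mul_mono]
      exact mono_congr (by intro u; fin_cases u <;> simp [d7, d5, ex, Finsupp.single_apply])
    · refine ⟨⟨6, by norm_num⟩, ?_⟩
      beta_reduce
      rw [X_mul_mono]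
      exact mono_congr (by intro u; fin_cases u <;> simp [d7, d5, ex, Finsupp.single_apply])
  · rw [Submodule.span_le]
    rintro _ ⟨⟨k, hk⟩, rfl⟩
    apply SetLike.mem_coe.mpr
    apply Submodule.subset_span
    interval_cases k
    · refine ⟨X 0, isHomogeneous_X K 0, monomial (ex 2 2 1) 1,
        mono_mem_piece hI 2 2 1 5 (by norm_num) (by norm_num) (by norm_num) (by norm_num), ?_⟩
      rw [X_mul_mono]
      exact (mono_congr (by intro u; fin_cases u <;> simp [d7, ex, Finsupp.single_apply])).symm
    · refine ⟨X 1, isHomogeneous_X K 1, monomial (ex 2 2 1) 1,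
        mono_mem_piece hI 2 2 1 5 (by norm_num) (by norm_num) (by norm_num) (by norm_num), ?_⟩
      rw [X_mul_mono]
      exact (mono_congr (by intro u; fin_cases u <;> simp [d7, ex, Finsupp.single_apply])).symm
    · refine ⟨X 2, isHomogeneous_X K 2, monomial (ex 2 2 1) 1,
        mono_mem_piece hI 2 2 1 5 (by norm_num) (by norm_num) (by norm_num) (by norm_num), ?_⟩
      rw [X_mul_mono]
      exact (mono_congr (by intro u; fin_cases u <;> simp [d7, ex, Finsupp.single_apply])).symm
    · refine ⟨X 0, isHomogeneous_X K 0, monomial (ex 2 1 2) 1,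
        mono_mem_piece hI 2 1 2 5 (by norm_num) (by norm_num) (by norm_num) (by norm_num), ?_⟩
      rw [X_mul_mono]
      exact (mono_congr (by intro u; fin_cases u <;> simp [d7, ex, Finsupp.single_apply])).symm
    · refine ⟨X 2, isHomogeneous_X K 2, monomial (ex 2 1 2) 1,
        mono_mem_piece hI 2 1 2 5 (by norm_num) (by norm_num) (by norm_num) (by norm_num), ?_⟩
      rw [X_mul_mono]
      exact (mono_congr (by intro u; fin_cases u <;> simp [d7, ex, Finsupp.single_apply])).symm
    · refine ⟨X 1, isHomogeneous_X K 1, monomial (ex 1 2 2) 1,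
        mono_mem_piece hI 1 2 2 5 (by norm_num) (by norm_num) (by norm_num) (by norm_num), ?_⟩
      rw [X_mul_mono]
      exact (mono_congr (by intro u; fin_cases u <;> simp [d7, ex, Finsupp.single_apply])).symm
    · refine ⟨X 2, isHomogeneous_X K 2, monomial (ex 1 2 2) 1,
        mono_mem_piece hI 1 2 2 5 (by norm_num) (by norm_num) (by norm_num) (by norm_num), ?_⟩
      rw [X_mul_mono]
      exact (mono_congr (by intro u; fin_cases u <;> simp [d7, ex, Finsupp.single_apply])).symm

lemma d5_inj : Function.Injective (d5) := by
  intro a b h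
  have h0 := DFunLike.congr_fun h (0 : Fin 3)
  have h1 := DFunLike.congr_fun h (1 : Fin 3)
  have h2 := DFunLike.congr_fun h (2 : Fin 3)
  fin_cases a <;> fin_cases b <;>
    first
      | rfl
      | (exfalso; simp [d5, ex, Finsupp.single_apply] at h0 h1 h2)

set_option maxHeartbeats 2000000 in
lemma d6_inj : Function.Injective (d6) := by
  intro a b h
  have h0 := DFunLike.congr_fun h (0 : Fin 3)
  have h1 := DFunLike.congr_fun h (1 : Fin 3)
  have h2 := DFunLike.congr_fun h (2 : Fin 3)
  fin_cases a <;> fin_cases b <;>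
    first
      | rfl
      | (exfalso; simp [d6, ex, Finsupp.single_apply] at h0 h1 h2)

lemma d7_inj : Function.Injective (d7) := by
  intro a b h
  have h0 := DFunLike.congr_fun h (0 : Fin 3)
  have h1 := DFunLike.congr_fun h (1 : Fin 3)
  have h2 := DFunLike.congr_fun h (2 : Fin 3)
  fin_cases a <;> fin_cases b <;>
    first
      | rfl
      | (exfalso; simp [d7, ex, Finsupp.single_apply] at h0 h1 h2)


end AuxStmt9

/-- Example 4.4 of the paper: `Z = 3P₁ + 3P₂ + 3P₃`.
For the fat point ideal `I = (y,z)³ ∩ (x,z)³ ∩ (x,y)³` of triple points at the three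
coordinate points of `ℙ²` over a field of characteristic `0`:
`dim I₅ = 3`, `dim I₆ = 10`, and the span of `R₁·I₅` has dimension exactly `7`
(so `μ₅` is neither injective nor surjective, and `I` needs `3` generators in degree 6). -/
theorem stmt_9 (K : Type*) [Field K] [CharZero K]
    (I : Ideal (MvPolynomial (Fin 3) K))
    (hI : I = (Ideal.span {X 1, X 2} : Ideal (MvPolynomial (Fin 3) K)) ^ 3 ⊓
        (Ideal.span {X 0, X 2} : Ideal (MvPolynomial (Fin 3) K)) ^ 3 ⊓
        (Ideal.span {X 0, X 1} : Ideal (MvPolynomial (Fin 3) K)) ^ 3) :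
    Module.finrank K ↥(idealPiece I 5) = 3 ∧
    Module.finrank K ↥(idealPiece I 6) = 10 ∧
    Module.finrank K ↥(mulSpan I 5) = 7 := by
  refine ⟨?_, ?_, ?_⟩
  · rw [piece5 hI]; exact finrank_mono_span d5 d5_inj
  · rw [piece6 hI]; exact finrank_mono_span d6 d6_inj
  · rw [mulSpan5 hI]; exact finrank_mono_span d7 d7_inj
end
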